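/- Let K be a field with a non-archimedean valuation v whose value group Γ = v(K*) is dense in ℝ, and let ω ∈ ℝ \ Γ. Then the K°-algebra A = { f = Σ_u α_u x^u ∈ K[x, x^{-1}] : v(α_u) + u·ω ≥ 0 for all u } is not finitely generated as a K°-algebra. -/

import Mathlib

section Aux

variable {K : Type*} [Field K] (v : K → WithTop ℝ)

/-- valuation of a finite sum is at least a common lower bound. -/
lemma aux_vsum {ι : Type*} (hv0 : v 0 = ⊤)
    (hvadd : ∀ α β : K, min (v α) (v β) ≤ v (α + β))
    (c : WithTop ℝ) (t : Finset ι) (h : ι → K)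
    (ht : ∀ i ∈ t, c ≤ v (h i)) : c ≤ v (∑ i ∈ t, h i) := by
  classical
  induction t using Finset.induction with
  | empty => simp [hv0]
  | @insert a t ha ih =>
      rw [Finset.sum_insert ha]
      refine le_trans (le_min (ht a (Finset.mem_insert_self a t)) ?_) (hvadd _ _)
      exact ih fun i hi => ht i (Finset.mem_insert_of_mem hi)

lemma aux_exists_pos_le (S : Finset (WithTop ℝ)) (h : ∀ x ∈ S, 0 < x) :
    ∃ δ : ℝ, 0 < δ ∧ ∀ x ∈ S, (δ : WithTop ℝ) ≤ x := by
  classical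
  induction S using Finset.induction with
  | empty => exact ⟨1, one_pos, by simp⟩
  | @insert a S ha ih =>
      obtain ⟨δ, hδ, hδle⟩ := ih fun x hx => h x (Finset.mem_insert_of_mem hx)
      have hapos : 0 < a := h a (Finset.mem_insert_self a S)
      induction a using WithTop.recTopCoe with
      | top =>
          exact ⟨δ, hδ, fun x hx => by
            rcases Finset.mem_insert.1 hx with rfl | hx
            · exact le_top
            · exact hδle x hx⟩
      | coe r =>
          have hr : 0 < r := by exact_mod_cast hapos
          refine ⟨min δ r, lt_min hδ hr, fun x hx => ?_⟩
          rcases Finset.mem_insert.1 hx with rfl | hx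
          · exact_mod_cast min_le_right δ r
          · exact le_trans (by exact_mod_cast min_le_left δ r) (hδle x hx)

lemma aux_shift (x : WithTop ℝ) (c t : ℝ) :
    (c : WithTop ℝ) ≤ x + (t : WithTop ℝ) ↔ ((c - t : ℝ) : WithTop ℝ) ≤ x := by
  induction x using WithTop.recTopCoe with
  | top => simp
  | coe r =>
      rw [← WithTop.coe_add, WithTop.coe_le_coe, WithTop.coe_le_coe]
      constructor <;> intro h <;> linarith

end Aux

/-- Let `K` be a field with a non-archimedean valuation `v` whose value group
`Γ = v(K^×)` is dense in `ℝ`, and let `ω ∈ ℝ \ Γ`.  Then the `K°`-algebra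
`A = { f = Σ α_u x^u ∈ K[x,x⁻¹] : v(α_u) + u·ω ≥ 0 ∀ u }` is not finitely generated
over `K°`:  there is no finite subset `s` of `A` such that `A` is contained in the
subring generated by `s` together with the constants from `K°`. -/
theorem stmt5 {K : Type*} [Field K]
    (v : K → WithTop ℝ)
    (hv0 : ∀ α : K, v α = ⊤ ↔ α = 0)
    (hvmul : ∀ α β : K, v (α * β) = v α + v β)
    (hvadd : ∀ α β : K, min (v α) (v β) ≤ v (α + β))
    (hdense : Dense {r : ℝ | ∃ α : K, v α = (r : WithTop ℝ)})
    (ω : ℝ) (hω : ¬ ∃ α : K, v α = (ω : WithTop ℝ)) :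
    ¬ ∃ s : Finset (AddMonoidAlgebra K ℤ),
        (∀ g ∈ s, ∀ u ∈ Finsupp.support g.coeff,
          (0 : WithTop ℝ) ≤ v (g.coeff u) + (((u : ℝ) * ω : ℝ) : WithTop ℝ)) ∧
        ∀ f : AddMonoidAlgebra K ℤ,
          (∀ u ∈ Finsupp.support f.coeff,
            (0 : WithTop ℝ) ≤ v (f.coeff u) + (((u : ℝ) * ω : ℝ) : WithTop ℝ)) →
          f ∈ Subring.closure
            ((↑s : Set (AddMonoidAlgebra K ℤ)) ∪
              {g | ∃ α : K, (0 : WithTop ℝ) ≤ v α ∧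
                g = AddMonoidAlgebra.single (0 : ℤ) α}) := by
  classical
  rintro ⟨s, hgen, hmem⟩
  -- basic facts about v
  have hvz : v 0 = ⊤ := (hv0 0).2 rfl
  have hv1 : v 1 = 0 := by
    have h := hvmul 1 1
    rw [one_mul] at h
    have hne : v 1 ≠ ⊤ := fun h' => one_ne_zero ((hv0 1).1 h')
    obtain ⟨r, hr⟩ := WithTop.ne_top_iff_exists.1 hne
    rw [← hr, ← WithTop.coe_add, WithTop.coe_inj] at h
    have hr0 : r = 0 := by linarith
    rw [← hr, hr0]
    norm_num
  have hvneg : ∀ α : K, v (-α) = v α := by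
    intro α
    have hm1 : v (-1 : K) = 0 := by
      have h := hvmul (-1) (-1)
      rw [neg_mul_neg, one_mul, hv1] at h
      have hne : v (-1 : K) ≠ ⊤ := by
        intro h'
        rw [h', top_add] at h
        exact absurd h.symm (by simp)
      obtain ⟨r, hr⟩ := WithTop.ne_top_iff_exists.1 hne
      rw [← hr, ← WithTop.coe_add] at h
      have h0 : (0 : ℝ) = r + r := by exact_mod_cast h
      have hr0 : r = 0 := by linarith
      rw [← hr, hr0]; norm_num
    calc v (-α) = v ((-1) * α) := by rw [neg_one_mul]
    _ = v (-1) + v α := hvmul _ _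
    _ = v α := by rw [hm1, zero_add]
  -- Γ membership shorthand
  set Γ : ℝ → Prop := fun r => ∃ α : K, v α = (r : WithTop ℝ) with hΓ
  have hΓmul : ∀ r t : ℝ, Γ r → Γ t → Γ (r + t) := by
    rintro r t ⟨α, hα⟩ ⟨β, hβ⟩
    exact ⟨α * β, by rw [hvmul, hα, hβ, WithTop.coe_add]⟩
  have hΓ0 : Γ 0 := ⟨1, hv1⟩
  -- choose δ > 0 below all "irrational-slope" generator values
  set F : Finset (WithTop ℝ) := s.biUnion (fun g =>
    (g.coeff.support.filter (fun u : ℤ => ¬ Γ ((u : ℝ) * ω))).image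
      (fun u => v (g.coeff u) + (((u : ℝ) * ω : ℝ) : WithTop ℝ))) with hF
  have hFpos : ∀ x ∈ F, 0 < x := by
    intro x hx
    rw [hF, Finset.mem_biUnion] at hx
    obtain ⟨g, hg, hx⟩ := hx
    rw [Finset.mem_image] at hx
    obtain ⟨u, hu, rfl⟩ := hx
    rw [Finset.mem_filter] at hu
    obtain ⟨hu, hirr⟩ := hu
    rcases lt_or_eq_of_le (hgen g hg u hu) with h | h
    · exact h
    · -- equality would give (u:ℝ)*ω ∈ Γ
      exfalso
      have hne : g.coeff u ≠ 0 := Finsupp.mem_support_iff.1 hu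
      have hvne : v (g.coeff u) ≠ ⊤ := fun h' => hne ((hv0 _).1 h')
      obtain ⟨r, hr⟩ := WithTop.ne_top_iff_exists.1 hvne
      rw [← hr, ← WithTop.coe_add] at h
      have hr0 : r + (u : ℝ) * ω = 0 := by exact_mod_cast h.symm
      have hinv : v (g.coeff u) + v (g.coeff u)⁻¹ = 0 := by
        rw [← hvmul, mul_inv_cancel₀ hne, hv1]
      rw [← hr] at hinv
      have hvinvne : v (g.coeff u)⁻¹ ≠ ⊤ := by
        intro h'
        rw [h', add_top] at hinv
        exact (by simp : (⊤ : WithTop ℝ) ≠ 0) hinv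
      obtain ⟨t, ht⟩ := WithTop.ne_top_iff_exists.1 hvinvne
      rw [← ht, ← WithTop.coe_add] at hinv
      have ht0 : r + t = 0 := by exact_mod_cast hinv
      exact hirr ⟨(g.coeff u)⁻¹, by rw [← ht]; congr 1; linarith⟩
  obtain ⟨δ, hδpos, hδle⟩ := aux_exists_pos_le F hFpos
  have hδF : ∀ g ∈ s, ∀ u ∈ g.coeff.support, ¬ Γ ((u : ℝ) * ω) →
      (δ : WithTop ℝ) ≤ v (g.coeff u) + (((u : ℝ) * ω : ℝ) : WithTop ℝ) := by
    intro g hg u hu hirr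
    refine hδle _ ?_
    rw [hF, Finset.mem_biUnion]
    exact ⟨g, hg, Finset.mem_image.2 ⟨u, Finset.mem_filter.2 ⟨hu, hirr⟩, rfl⟩⟩
  -- the invariant subring
  set Q : AddMonoidAlgebra K ℤ → Prop := fun f => ∀ u : ℤ,
    (0 : WithTop ℝ) ≤ v (f.coeff u) + (((u : ℝ) * ω : ℝ) : WithTop ℝ) ∧
    (¬ Γ ((u : ℝ) * ω) →
      (δ : WithTop ℝ) ≤ v (f.coeff u) + (((u : ℝ) * ω : ℝ) : WithTop ℝ)) with hQ
  have hQtop : ∀ (f : AddMonoidAlgebra K ℤ) (u : ℤ), f.coeff u = 0 →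
      ((0 : WithTop ℝ) ≤ v (f.coeff u) + (((u : ℝ) * ω : ℝ) : WithTop ℝ) ∧
      (¬ Γ ((u : ℝ) * ω) →
        (δ : WithTop ℝ) ≤ v (f.coeff u) + (((u : ℝ) * ω : ℝ) : WithTop ℝ))) := by
    intro f u h
    rw [h, hvz, top_add]
    exact ⟨le_top, fun _ => le_top⟩
  have hQsingle : ∀ α : K, (0 : WithTop ℝ) ≤ v α →
      Q (AddMonoidAlgebra.single (0 : ℤ) α) := by
    intro α hα u
    by_cases hu : u = 0
    · subst hu
      have h1 : (AddMonoidAlgebra.single (0 : ℤ) α).coeff (0 : ℤ) = α :=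
        Finsupp.single_eq_same
      rw [h1]
      have h2 : (((0 : ℤ) : ℝ) * ω : ℝ) = 0 := by norm_num
      rw [h2]
      constructor
      · rw [WithTop.coe_zero, add_zero]; exact hα
      · intro hirr; exact absurd hΓ0 hirr
    · exact hQtop _ u (Finsupp.single_eq_of_ne' (Ne.symm hu))
  have hQadd : ∀ a b, Q a → Q b → Q (a + b) := by
    intro a b ha hb u
    have hab : (a + b).coeff u = a.coeff u + b.coeff u := Finsupp.add_apply a.coeff b.coeff u
    have key : ∀ c : WithTop ℝ,
        c ≤ v (a.coeff u) + (((u : ℝ) * ω : ℝ) : WithTop ℝ) →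
        c ≤ v (b.coeff u) + (((u : ℝ) * ω : ℝ) : WithTop ℝ) →
        c ≤ v ((a + b).coeff u) + (((u : ℝ) * ω : ℝ) : WithTop ℝ) := by
      intro c h1 h2
      rw [hab]
      rcases le_total (v (a.coeff u)) (v (b.coeff u)) with h | h
      · have := (min_eq_left h) ▸ hvadd (a.coeff u) (b.coeff u)
        exact le_trans h1 (add_le_add_left this _)
      · have := (min_eq_right h) ▸ hvadd (a.coeff u) (b.coeff u)
        exact le_trans h2 (add_le_add_left this _)
    exact ⟨key 0 (ha u).1 (hb u).1,
      fun hirr => key _ ((ha u).2 hirr) ((hb u).2 hirr)⟩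
  have hQmul : ∀ a b, Q a → Q b → Q (a * b) := by
    intro a b ha hb u
    have key : ∀ c : ℝ,
        (∀ a₁ a₂ : ℤ, a₁ + a₂ = u →
          (c : WithTop ℝ) ≤ (v (a.coeff a₁) + (((a₁ : ℝ) * ω : ℝ) : WithTop ℝ)) +
            (v (b.coeff a₂) + (((a₂ : ℝ) * ω : ℝ) : WithTop ℝ))) →
        (c : WithTop ℝ) ≤ v ((a * b).coeff u) + (((u : ℝ) * ω : ℝ) : WithTop ℝ) := by
      intro c hc
      rw [aux_shift]
      rw [AddMonoidAlgebra.mul_apply]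
      unfold Finsupp.sum
      refine aux_vsum v hvz hvadd _ _ _ (fun a₁ _ => ?_)
      refine aux_vsum v hvz hvadd _ _ _ (fun a₂ _ => ?_)
      dsimp only
      by_cases h12 : a₁ + a₂ = u
      · rw [if_pos h12, hvmul, ← aux_shift]
        have hc' := hc a₁ a₂ h12
        have hrearr : (v (a.coeff a₁) + (((a₁ : ℝ) * ω : ℝ) : WithTop ℝ)) +
            (v (b.coeff a₂) + (((a₂ : ℝ) * ω : ℝ) : WithTop ℝ)) =
            v (a.coeff a₁) + v (b.coeff a₂) + (((u : ℝ) * ω : ℝ) : WithTop ℝ) := by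
          have hu : ((u : ℝ) * ω : ℝ) = ((a₁ : ℝ) * ω) + ((a₂ : ℝ) * ω) := by
            rw [← h12]; push_cast; ring
          rw [hu, WithTop.coe_add, add_add_add_comm]
        rwa [hrearr] at hc'
      · rw [if_neg h12, hvz]; exact le_top
    constructor
    · refine key 0 (fun a₁ a₂ _ => ?_)
      rw [show (((0 : ℝ)) : WithTop ℝ) = 0 + 0 by norm_num]
      exact add_le_add (ha a₁).1 (hb a₂).1
    · intro hirr
      refine key δ (fun a₁ a₂ h12 => ?_)
      have hone : ¬ Γ ((a₁ : ℝ) * ω) ∨ ¬ Γ ((a₂ : ℝ) * ω) := by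
        by_contra h
        push_neg at h
        refine hirr ?_
        have := hΓmul _ _ h.1 h.2
        have he : ((a₁ : ℝ) * ω) + ((a₂ : ℝ) * ω) = (u : ℝ) * ω := by
          rw [← h12]; push_cast; ring
        rwa [he] at this
      rcases hone with h | h
      · rw [← add_zero (δ : WithTop ℝ)]
        exact add_le_add ((ha a₁).2 h) (hb a₂).1
      · rw [← zero_add (δ : WithTop ℝ)]
        exact add_le_add (ha a₁).1 ((hb a₂).2 h)
  -- package as a subring
  let S : Subring (AddMonoidAlgebra K ℤ) :=
    { carrier := {f | Q f}
      zero_mem' := fun u => hQtop 0 u rfl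
      one_mem' := by
        rw [Set.mem_setOf_eq, AddMonoidAlgebra.one_def]
        exact hQsingle 1 (le_of_eq hv1.symm)
      add_mem' := fun {a b} ha hb => hQadd a b ha hb
      mul_mem' := fun {a b} ha hb => hQmul a b ha hb
      neg_mem' := by
        intro a ha u
        have h : (-a).coeff u = -(a.coeff u) := Finsupp.neg_apply a.coeff u
        have h2 := ha u
        rw [h, hvneg]
        exact h2 }
  have hclosure : Subring.closure
      ((↑s : Set (AddMonoidAlgebra K ℤ)) ∪
        {g | ∃ α : K, (0 : WithTop ℝ) ≤ v α ∧
          g = AddMonoidAlgebra.single (0 : ℤ) α}) ≤ S := by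
    rw [Subring.closure_le]
    rintro g (hg | ⟨α, hα, rfl⟩)
    · intro u
      by_cases hu : u ∈ g.coeff.support
      · exact ⟨hgen g hg u hu, fun hirr => hδF g hg u hu hirr⟩
      · exact hQtop g u (Finsupp.notMem_support_iff.1 hu)
    · exact hQsingle α hα
  -- produce a witness violating the invariant
  obtain ⟨r, hrΓ, hr⟩ := hdense.exists_mem_open isOpen_Ioo
    (⟨-ω + δ / 2, by constructor <;> simp <;> linarith⟩ :
      (Set.Ioo (-ω) (-ω + δ)).Nonempty)
  obtain ⟨α, hα⟩ := hrΓ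
  have hαne : α ≠ 0 := by
    intro h; rw [h, hvz] at hα; exact (by simp : (⊤ : WithTop ℝ) ≠ (r : WithTop ℝ)) hα
  set f : AddMonoidAlgebra K ℤ := AddMonoidAlgebra.single (1 : ℤ) α with hf
  have hf1 : f.coeff (1 : ℤ) = α := Finsupp.single_eq_same
  have hfA : ∀ u ∈ f.coeff.support,
      (0 : WithTop ℝ) ≤ v (f.coeff u) + (((u : ℝ) * ω : ℝ) : WithTop ℝ) := by
    intro u hu
    have : u = 1 := by
      have := Finsupp.support_single_subset hu
      simpa using this
    subst this
    rw [hf1, hα]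
    have : (((1 : ℤ) : ℝ) * ω : ℝ) = ω := by norm_num
    rw [this, ← WithTop.coe_add, ← WithTop.coe_zero, WithTop.coe_le_coe]
    have := hr.1
    linarith
  have hfS : Q f := hclosure (hmem f hfA)
  have hirr1 : ¬ Γ (((1 : ℤ) : ℝ) * ω) := by
    intro h
    refine hω ?_
    have : (((1 : ℤ) : ℝ) * ω) = ω := by norm_num
    rwa [this] at h
  have hkey := (hfS 1).2 hirr1
  rw [hf1, hα] at hkey
  have : (((1 : ℤ) : ℝ) * ω : ℝ) = ω := by norm_num
  rw [this, ← WithTop.coe_add, WithTop.coe_le_coe] at hkey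
  have := hr.2
  linarith
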